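/- Let n ≥ 4 and let m ∈ {2,3,…,n−2}. Then the restricted incomplete rotator graph RIR_n({n−1,n},m) is not strongly connected. In particular, there is no directed path in this graph from any node whose first four symbols are n, n−2, n−1, n−3 to any node whose first two symbols are n, n−1. -/

import Mathlib

open Equiv

/-- The prefix-rotation `σ_r = (1 2 ⋯ r)` of positions, 0-indexed as a
permutation of `Fin n` (it sends position `i` to `i+1` for `i < r-1`,
sends position `r-1` to `0`, and fixes all positions `≥ r`). -/
def sigmaRot (n r : ℕ) : Equiv.Perm (Fin n) :=
  if h : r - 1 < n then Fin.cycleRange ⟨r - 1, h⟩ else 1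

/-- The permutation `σ_{r₁}σ_{r₂}⋯σ_{r_i}` (composed left-to-right) given by the
first `i` entries of the sequence `S`. -/
def partialProd (n : ℕ) (S : List ℕ) (i : ℕ) : Equiv.Perm (Fin n) :=
  ((S.take i).map (sigmaRot n)).prod

/-- `S` is a Hamilton sequence for the restricted rotator graph `RR_n(R)`. -/
def IsHamiltonSeq (n : ℕ) (R : Set ℕ) (S : List ℕ) : Prop :=
  S.length = Nat.factorial n ∧
  (∀ r ∈ S, r ∈ R) ∧
  (∀ i < Nat.factorial n, ∀ j < Nat.factorial n,
      partialProd n S i = partialProd n S j → i = j) ∧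
  partialProd n S S.length = 1

/-- The value (0-indexed symbol) at the last position of the string `a`;
the one-line-notation symbol there is `lastVal a + 1`. -/
def lastVal {n : ℕ} (a : Equiv.Perm (Fin n)) : ℕ :=
  if h : 0 < n then ((a ⟨n - 1, Nat.sub_lt h Nat.one_pos⟩ : Fin n) : ℕ) else 0

/-- Arc relation of the restricted incomplete rotator graph `RIR_n(R,m)`:
both endpoints have last symbol `≤ m` and `b = a·σ_r` for some `r ∈ R`. -/
def RIRAdj (n m : ℕ) (R : Set ℕ) (a b : Equiv.Perm (Fin n)) : Prop :=
  lastVal a < m ∧ lastVal b < m ∧ ∃ r ∈ R, b = a * sigmaRot n r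

/-- `RIR_n(R,m)` is strongly connected. -/
def StronglyConnectedRIR (n m : ℕ) (R : Set ℕ) : Prop :=
  ∀ a b : Equiv.Perm (Fin n), lastVal a < m → lastVal b < m →
    Relation.ReflTransGen (RIRAdj n m R) a b

/-- The reuse operation: replace each entry `r` by `n,…,n,n+1-r` (`n-1` copies of `n`). -/
def reuseOp (n : ℕ) (S : List ℕ) : List ℕ :=
  (S.map (fun r => List.replicate (n - 1) n ++ [n + 1 - r])).flatten

/-- Corbett's reuse sequences: `C₁ = (1)` and `C_k = reuse_k(C_{k-1})`. -/
def corbettC : ℕ → List ℕ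
  | 0 => []
  | 1 => [1]
  | k + 2 => reuseOp (k + 2) (corbettC (k + 1))

/-- The recycle operation: replace each entry `r` by
`n, n, n-1, …, n-1, n, …, n` (`r-1` copies of `n-1`, then `n-r-1` copies of `n`). -/
def recycleOp (n : ℕ) (S : List ℕ) : List ℕ :=
  (S.map (fun r => n :: n :: (List.replicate (r - 1) (n - 1) ++ List.replicate (n - r - 1) n))).flatten

/-- The canonical recycle sequences: `D₁ = (1)` and `D_k = recycle_k(D_{k-1})`. -/
def recycleD : ℕ → List ℕ
  | 0 => []
  | 1 => [1]
  | k + 2 => recycleOp (k + 2) (recycleD (k + 1))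

/-- The rewind operation `rewind_m(S)` (with `S = T, n-1, n-1`):
`(T,n-1,n)`, then `m-2` copies of `(T,n)`, then `(T,n-1,n)`, then `m-2` copies of `n`. -/
def rewindOp (n m : ℕ) (S : List ℕ) : List ℕ :=
  (S.dropLast.dropLast ++ [n - 1, n])
    ++ (List.replicate (m - 2) (S.dropLast.dropLast ++ [n])).flatten
    ++ (S.dropLast.dropLast ++ [n - 1, n])
    ++ List.replicate (m - 2) n

/-- The canonical rewind sequences: `W₂ = (2,2)` and `W_k = rewind_k(W_{k-1})`. -/
def rewindW : ℕ → List ℕ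
  | 0 => []
  | 1 => []
  | 2 => [2, 2]
  | k + 3 => rewindOp (k + 3) (k + 3) (rewindW (k + 2))

/-- `S` is a Hamilton sequence for the restricted incomplete rotator graph `RIR_n(R,m)`,
starting from the string `n n-1 ⋯ 1` (which is `Fin.revPerm`). -/
def IsHamiltonSeqRIR (n m : ℕ) (R : Set ℕ) (S : List ℕ) : Prop :=
  S.length = m * Nat.factorial (n - 1) ∧
  (∀ r ∈ S, r ∈ R) ∧
  (∀ i < S.length, ∀ j < S.length,
      Fin.revPerm * partialProd n S i = Fin.revPerm * partialProd n S j → i = j) ∧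
  {b : Equiv.Perm (Fin n) | ∃ i < S.length, b = Fin.revPerm * partialProd n S i}
    = {b : Equiv.Perm (Fin n) | lastVal b < m} ∧
  Fin.revPerm * partialProd n S S.length = Fin.revPerm

/-- The cyclic shift `shift²` moving the first two entries to the end. -/
def shift2 (S : List ℕ) : List ℕ := S.drop 2 ++ S.take 2


private lemma cr_lt {n : ℕ} {i j : Fin n} (h : (j : ℕ) < (i : ℕ)) :
    ((Fin.cycleRange i j : Fin n) : ℕ) = (j : ℕ) + 1 := by
  cases n with
  | zero => exact i.elim0
  | succ k => exact Fin.coe_cycleRange_of_lt (by rwa [Fin.lt_def])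

private lemma cr_self {n : ℕ} (i : Fin n) :
    ((Fin.cycleRange i i : Fin n) : ℕ) = 0 := by
  cases n with
  | zero => exact i.elim0
  | succ k => rw [Fin.cycleRange_self]; rfl

private lemma cr_gt {n : ℕ} {i j : Fin n} (h : (i : ℕ) < (j : ℕ)) :
    Fin.cycleRange i j = j := by
  cases n with
  | zero => exact i.elim0
  | succ k => exact Fin.cycleRange_of_gt (by rwa [Fin.lt_def])

private lemma sig_top (n : ℕ) (hn : 4 ≤ n) (x : Fin n) (hx0 : (x : ℕ) ≠ 0) :
    sigmaRot n n ⟨(x : ℕ) - 1, by omega⟩ = x := by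
  have hσ : sigmaRot n n = Fin.cycleRange ⟨n - 1, by omega⟩ :=
    dif_pos (show n - 1 < n by omega)
  rw [hσ]
  refine Fin.ext ?_
  rw [cr_lt (show ((⟨(x : ℕ) - 1, by omega⟩ : Fin n) : ℕ) < n - 1 by
    show (x : ℕ) - 1 < n - 1; omega)]
  show (x : ℕ) - 1 + 1 = (x : ℕ)
  have := x.isLt
  omega

private lemma sig_top_last (n : ℕ) (hn : 4 ≤ n) :
    sigmaRot n n ⟨n - 1, by omega⟩ = ⟨0, by omega⟩ := by
  have hσ : sigmaRot n n = Fin.cycleRange ⟨n - 1, by omega⟩ :=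
    dif_pos (show n - 1 < n by omega)
  rw [hσ]
  exact Fin.ext (cr_self _)

private lemma sig_sub (n : ℕ) (hn : 4 ≤ n) (x : Fin n) (hx0 : (x : ℕ) ≠ 0)
    (hxle : (x : ℕ) ≤ n - 2) :
    sigmaRot n (n - 1) ⟨(x : ℕ) - 1, by omega⟩ = x := by
  have hσ : sigmaRot n (n - 1) = Fin.cycleRange ⟨n - 1 - 1, by omega⟩ :=
    dif_pos (show n - 1 - 1 < n by omega)
  rw [hσ]
  refine Fin.ext ?_
  rw [cr_lt (show ((⟨(x : ℕ) - 1, by omega⟩ : Fin n) : ℕ) < n - 1 - 1 by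
    show (x : ℕ) - 1 < n - 1 - 1; omega)]
  show (x : ℕ) - 1 + 1 = (x : ℕ)
  omega

private lemma sig_sub_zero (n : ℕ) (hn : 4 ≤ n) :
    sigmaRot n (n - 1) ⟨n - 2, by omega⟩ = ⟨0, by omega⟩ := by
  have hσ : sigmaRot n (n - 1) = Fin.cycleRange ⟨n - 1 - 1, by omega⟩ :=
    dif_pos (show n - 1 - 1 < n by omega)
  rw [hσ]
  have h2 : (⟨n - 2, by omega⟩ : Fin n) = ⟨n - 1 - 1, by omega⟩ := Fin.ext (by show n - 2 = n - 1 - 1; omega)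
  rw [h2]
  exact Fin.ext (cr_self _)

private lemma sig_sub_last (n : ℕ) (hn : 4 ≤ n) :
    sigmaRot n (n - 1) ⟨n - 1, by omega⟩ = ⟨n - 1, by omega⟩ := by
  have hσ : sigmaRot n (n - 1) = Fin.cycleRange ⟨n - 1 - 1, by omega⟩ :=
    dif_pos (show n - 1 - 1 < n by omega)
  rw [hσ]
  exact cr_gt (by show n - 1 - 1 < n - 1; omega)

/-- Position of a large value drops by one (mod `n-1`) along each arc. -/
private lemma step_pos (n m : ℕ) (hn : 4 ≤ n) (hm : m ≤ n - 2) (a b : Equiv.Perm (Fin n))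
    (h : RIRAdj n m {n - 1, n} a b) (t : Fin n) (ht : n - 2 ≤ (t : ℕ)) :
    (((b⁻¹ t : Fin n) : ℕ) : ZMod (n - 1)) = (((a⁻¹ t : Fin n) : ℕ) : ZMod (n - 1)) - 1 := by
  obtain ⟨ha, hb, r, hr, rfl⟩ := h
  simp only [lastVal, dif_pos (show 0 < n by omega)] at ha hb
  obtain ⟨x, hxdef⟩ : ∃ x, a⁻¹ t = x := ⟨_, rfl⟩
  rw [hxdef]
  have hax : a x = t := by rw [← hxdef]; exact a.apply_symm_apply t
  have hxlt : (x : ℕ) < n := x.isLt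
  have htlt : (t : ℕ) < n := t.isLt
  have hxne : (x : ℕ) ≠ n - 1 := by
    intro hx
    have hx' : x = ⟨n - 1, by omega⟩ := Fin.ext hx
    rw [hx'] at hax
    have := congrArg Fin.val hax
    omega
  simp only [Set.mem_insert_iff, Set.mem_singleton_iff] at hr
  rcases hr with hr | hr
  · -- r = n - 1
    subst hr
    by_cases hx0 : (x : ℕ) = 0
    · have hbinv : (a * sigmaRot n (n - 1))⁻¹ t = ⟨n - 2, by omega⟩ := by
        rw [Equiv.Perm.inv_eq_iff_eq, Equiv.Perm.mul_apply, sig_sub_zero n hn]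
        rw [show (⟨0, by omega⟩ : Fin n) = x from Fin.ext (by show 0 = (x : ℕ); omega), hax]
      rw [hbinv, hx0]
      have h3 : ((n - 2 : ℕ) : ZMod (n - 1)) = ((n - 1 : ℕ) : ZMod (n - 1)) - 1 := by
        rw [show n - 1 = (n - 2) + 1 from by omega]
        push_cast
        ring
      show ((n - 2 : ℕ) : ZMod (n - 1)) = ((0 : ℕ) : ZMod (n - 1)) - 1
      rw [h3, ZMod.natCast_self]
      simp
    · have hbinv : (a * sigmaRot n (n - 1))⁻¹ t = ⟨(x : ℕ) - 1, by omega⟩ := by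
        rw [Equiv.Perm.inv_eq_iff_eq, Equiv.Perm.mul_apply,
          sig_sub n hn x hx0 (by omega), hax]
      rw [hbinv]
      show (((x : ℕ) - 1 : ℕ) : ZMod (n - 1)) = ((x : ℕ) : ZMod (n - 1)) - 1
      rw [Nat.cast_sub (by omega), Nat.cast_one]
  · -- r = n
    have hr' : n = r := hr.symm
    subst hr'
    rw [Equiv.Perm.mul_apply, sig_top_last n hn] at hb
    have hx0 : (x : ℕ) ≠ 0 := by
      intro h0
      have hx' : x = ⟨0, by omega⟩ := Fin.ext h0
      rw [hx'] at hax
      have := congrArg Fin.val hax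
      omega
    have hbinv : (a * sigmaRot n n)⁻¹ t = ⟨(x : ℕ) - 1, by omega⟩ := by
      rw [Equiv.Perm.inv_eq_iff_eq, Equiv.Perm.mul_apply, sig_top n hn x hx0, hax]
    rw [hbinv]
    show (((x : ℕ) - 1 : ℕ) : ZMod (n - 1)) = ((x : ℕ) : ZMod (n - 1)) - 1
    rw [Nat.cast_sub (by omega), Nat.cast_one]

/-- The cyclic invariant `pos(n-2) - pos(n-1) (mod n-1)` is constant along directed paths. -/
private lemma path_inv (n m : ℕ) (hn : 4 ≤ n) (hm : m ≤ n - 2) (a b : Equiv.Perm (Fin n))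
    (h : Relation.ReflTransGen (RIRAdj n m {n - 1, n}) a b) :
    (((b⁻¹ ⟨n - 2, by omega⟩ : Fin n) : ℕ) : ZMod (n - 1))
      - (((b⁻¹ ⟨n - 1, by omega⟩ : Fin n) : ℕ) : ZMod (n - 1))
    = (((a⁻¹ ⟨n - 2, by omega⟩ : Fin n) : ℕ) : ZMod (n - 1))
      - (((a⁻¹ ⟨n - 1, by omega⟩ : Fin n) : ℕ) : ZMod (n - 1)) := by
  induction h with
  | refl => rfl
  | tail hab hstep ih =>
    have h1 := step_pos n m hn hm _ _ hstep ⟨n - 1, by omega⟩ (by show n - 2 ≤ n - 1; omega)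
    have h2 := step_pos n m hn hm _ _ hstep ⟨n - 2, by omega⟩ (by show n - 2 ≤ n - 2; omega)
    rw [h1, h2, ← ih]
    ring

set_option maxHeartbeats 2000000 in
/-- No directed path from a node with values `n-1` at position 0 and `n-2` at position 2
to a node with values `n-1` at position 0 and `n-2` at position 1. -/
private lemma nopath (n m : ℕ) (hn : 4 ≤ n) (hm : m ≤ n - 2) (a b : Equiv.Perm (Fin n))
    (ha0 : ((a ⟨0, Nat.pos_of_ne_zero (by omega)⟩ : Fin n) : ℕ) = n - 1)
    (ha2 : ((a ⟨2, by omega⟩ : Fin n) : ℕ) = n - 2)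
    (hb0 : ((b ⟨0, Nat.pos_of_ne_zero (by omega)⟩ : Fin n) : ℕ) = n - 1)
    (hb1 : ((b ⟨1, by omega⟩ : Fin n) : ℕ) = n - 2) :
    ¬ Relation.ReflTransGen (RIRAdj n m {n - 1, n}) a b := by
  intro hpath
  have key := path_inv n m hn hm a b hpath
  have e1 : a⁻¹ ⟨n - 1, by omega⟩ = ⟨0, Nat.pos_of_ne_zero (by omega)⟩ := by
    rw [Equiv.Perm.inv_eq_iff_eq]
    exact Fin.ext ha0.symm
  have e2 : a⁻¹ ⟨n - 2, by omega⟩ = ⟨2, by omega⟩ := by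
    rw [Equiv.Perm.inv_eq_iff_eq]
    exact Fin.ext ha2.symm
  have e3 : b⁻¹ ⟨n - 1, by omega⟩ = ⟨0, Nat.pos_of_ne_zero (by omega)⟩ := by
    rw [Equiv.Perm.inv_eq_iff_eq]
    exact Fin.ext hb0.symm
  have e4 : b⁻¹ ⟨n - 2, by omega⟩ = ⟨1, by omega⟩ := by
    rw [Equiv.Perm.inv_eq_iff_eq]
    exact Fin.ext hb1.symm
  simp only [e1, e2, e3, e4] at key
  have key2 : ((1 : ℕ) : ZMod (n - 1)) - ((0 : ℕ) : ZMod (n - 1))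
      = ((2 : ℕ) : ZMod (n - 1)) - ((0 : ℕ) : ZMod (n - 1)) := key
  rw [Nat.cast_zero, sub_zero, sub_zero] at key2
  haveI : NeZero (n - 1) := ⟨by omega⟩
  have key3 := congrArg ZMod.val key2
  rw [ZMod.val_cast_of_lt (by omega), ZMod.val_cast_of_lt (by omega)] at key3
  omega

private lemma lastVal_lt {n m : ℕ} (hn : 4 ≤ n) (a : Equiv.Perm (Fin n))
    (h : ((a ⟨n - 1, by omega⟩ : Fin n) : ℕ) < m) : lastVal a < m := by
  simp only [lastVal, dif_pos (show 0 < n by omega)]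
  exact h

private lemma eA1 (n : ℕ) (hn : 4 ≤ n) :
    (Equiv.swap (⟨0, by omega⟩ : Fin n) ⟨n - 1, by omega⟩)⁻¹ ⟨n - 1, by omega⟩
      = ⟨0, by omega⟩ := by
  rw [Equiv.swap_inv, Equiv.swap_apply_right]

private lemma eA2 (n : ℕ) (hn : 4 ≤ n) :
    (Equiv.swap (⟨0, by omega⟩ : Fin n) ⟨n - 1, by omega⟩)⁻¹ ⟨n - 2, by omega⟩
      = ⟨n - 2, by omega⟩ := by
  rw [Equiv.swap_inv, Equiv.swap_apply_of_ne_of_ne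
    (Fin.ne_of_val_ne (show (n - 2 : ℕ) ≠ 0 by omega))
    (Fin.ne_of_val_ne (show (n - 2 : ℕ) ≠ n - 1 by omega))]

private lemma eB1 (n : ℕ) (hn : 4 ≤ n) :
    (Equiv.swap (⟨n - 2, by omega⟩ : Fin n) ⟨n - 3, by omega⟩
        * Equiv.swap (⟨0, by omega⟩ : Fin n) ⟨n - 1, by omega⟩)⁻¹ ⟨n - 1, by omega⟩
      = ⟨0, by omega⟩ := by
  rw [mul_inv_rev, Equiv.Perm.mul_apply, Equiv.swap_inv, Equiv.swap_inv,
    Equiv.swap_apply_of_ne_of_ne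
      (a := ⟨n - 2, by omega⟩) (b := ⟨n - 3, by omega⟩) (x := ⟨n - 1, by omega⟩)
      (Fin.ne_of_val_ne (show (n - 1 : ℕ) ≠ n - 2 by omega))
      (Fin.ne_of_val_ne (show (n - 1 : ℕ) ≠ n - 3 by omega)),
    Equiv.swap_apply_right]

private lemma eB2 (n : ℕ) (hn : 4 ≤ n) :
    (Equiv.swap (⟨n - 2, by omega⟩ : Fin n) ⟨n - 3, by omega⟩
        * Equiv.swap (⟨0, by omega⟩ : Fin n) ⟨n - 1, by omega⟩)⁻¹ ⟨n - 2, by omega⟩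
      = ⟨n - 3, by omega⟩ := by
  rw [mul_inv_rev, Equiv.Perm.mul_apply, Equiv.swap_inv, Equiv.swap_inv,
    Equiv.swap_apply_left,
    Equiv.swap_apply_of_ne_of_ne
      (a := ⟨0, by omega⟩) (b := ⟨n - 1, by omega⟩) (x := ⟨n - 3, by omega⟩)
      (Fin.ne_of_val_ne (show (n - 3 : ℕ) ≠ 0 by omega))
      (Fin.ne_of_val_ne (show (n - 3 : ℕ) ≠ n - 1 by omega))]

private lemma lA (n m : ℕ) (hn : 4 ≤ n) (hm2 : 2 ≤ m) :
    lastVal (Equiv.swap (⟨0, Nat.pos_of_ne_zero (by omega)⟩ : Fin n) ⟨n - 1, by omega⟩) < m :=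
  lastVal_lt hn _ (by
    rw [Equiv.swap_apply_right]
    show (0 : ℕ) < m; omega)

private lemma lB (n m : ℕ) (hn : 4 ≤ n) (hm2 : 2 ≤ m) :
    lastVal (Equiv.swap (⟨n - 2, by omega⟩ : Fin n) ⟨n - 3, by omega⟩
      * Equiv.swap (⟨0, Nat.pos_of_ne_zero (by omega)⟩ : Fin n) ⟨n - 1, by omega⟩) < m :=
  lastVal_lt hn _ (by
    rw [Equiv.Perm.mul_apply, Equiv.swap_apply_right,
      Equiv.swap_apply_of_ne_of_ne
        (a := ⟨n - 2, by omega⟩) (b := ⟨n - 3, by omega⟩) (x := ⟨0, Nat.pos_of_ne_zero (by omega)⟩)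
        (Fin.ne_of_val_ne (show (0 : ℕ) ≠ n - 2 by omega))
        (Fin.ne_of_val_ne (show (0 : ℕ) ≠ n - 3 by omega))]
    show (0 : ℕ) < m; omega)

set_option maxHeartbeats 1000000 in
private lemma notSC (n m : ℕ) (hn : 4 ≤ n) (hm2 : 2 ≤ m) (hm : m ≤ n - 2) :
    ¬ StronglyConnectedRIR n m {n - 1, n} := by
  intro hSC
  have key := path_inv n m hn hm _ _ (hSC _ _ (lA n m hn hm2) (lB n m hn hm2))
  simp only [eA1 n hn, eA2 n hn, eB1 n hn, eB2 n hn] at key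
  have key2 : ((n - 3 : ℕ) : ZMod (n - 1)) - ((0 : ℕ) : ZMod (n - 1))
      = ((n - 2 : ℕ) : ZMod (n - 1)) - ((0 : ℕ) : ZMod (n - 1)) := key
  rw [Nat.cast_zero, sub_zero, sub_zero] at key2
  haveI : NeZero (n - 1) := ⟨by omega⟩
  have key3 := congrArg ZMod.val key2
  rw [ZMod.val_cast_of_lt (by omega), ZMod.val_cast_of_lt (by omega)] at key3
  omega

/-- For `n ≥ 4` and `m ∈ {2,…,n-2}`, the restricted incomplete rotator graph
`RIR_n({n-1,n},m)` is not strongly connected; in particular there is no directed path from any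
node whose first four symbols are `n, n-2, n-1, n-3` to any node whose first two symbols are
`n, n-1` (symbols `1,…,n` are represented by the `Fin n` values `0,…,n-1`). -/
theorem stmt2 (n m : ℕ) (hn : 4 ≤ n) (hm2 : 2 ≤ m) (hm : m ≤ n - 2) :
    ¬ StronglyConnectedRIR n m {n - 1, n} ∧
    ∀ a b : Equiv.Perm (Fin n),
      lastVal a < m → lastVal b < m →
      ((a ⟨0, by omega⟩ : Fin n) : ℕ) = n - 1 →
      ((a ⟨1, by omega⟩ : Fin n) : ℕ) = n - 3 →
      ((a ⟨2, by omega⟩ : Fin n) : ℕ) = n - 2 →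
      ((a ⟨3, by omega⟩ : Fin n) : ℕ) = n - 4 →
      ((b ⟨0, by omega⟩ : Fin n) : ℕ) = n - 1 →
      ((b ⟨1, by omega⟩ : Fin n) : ℕ) = n - 2 →
      ¬ Relation.ReflTransGen (RIRAdj n m {n - 1, n}) a b := by
  refine ⟨notSC n m hn hm2 hm, ?_⟩
  intro a b _ _ ha0 _ ha2 _ hb0 hb1
  exact nopath n m hn hm a b ha0 ha2 hb0 hb1
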